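/- The Fourier transform of f_m(x) = cosh(x)^{-m}, namely ∫_{-∞}^{∞} e^{-ikx} cosh(x)^{-m} dx, equals (π/(m-1)!) · (∏_{l = m-2, m-4, ..., down to 1} (k² + l²)) · (1/cosh(πk/2)) when m is odd, and equals (π/(m-1)!) · (∏_{l = m-2, m-4, ..., down to 1} (k² + l²)) · (k/sinh(πk/2)) when m is even. -/

import Mathlib

open MeasureTheory Complex

lemma cpow_pos_eq (r : ℝ) (hr : 0 < r) (w : ℂ) :
    (r : ℂ) ^ w = Complex.exp (w * Real.log r) := by
  rw [Complex.cpow_def_of_ne_zero (by exact_mod_cast hr.ne'), ← Complex.ofReal_log hr.le,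
    mul_comm]

lemma integral_eq_beta (m : ℕ) (hm : 1 ≤ m) (k : ℝ) :
    (∫ x : ℝ, Complex.exp (-(Complex.I * k * x)) / ((Real.cosh x : ℂ)) ^ m)
      = 2 ^ (m - 1) *
        Complex.betaIntegral ((m - Complex.I * k) / 2) ((m + Complex.I * k) / 2) := by
  obtain ⟨m, rfl⟩ : ∃ m', m = m' + 1 := ⟨m - 1, (Nat.succ_pred_eq_of_pos hm).symm⟩
  simp only [Nat.add_sub_cancel]
  set u : ℂ := ((m + 1 : ℕ) - Complex.I * k) / 2 with hu
  set v : ℂ := ((m + 1 : ℕ) + Complex.I * k) / 2 with hv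
  set f : ℝ → ℝ := fun x => (1 + Real.exp (-(2 * x)))⁻¹ with hf
  set f' : ℝ → ℝ := fun x => 2 * Real.exp (-(2 * x)) / (1 + Real.exp (-(2 * x))) ^ 2 with hf'
  set g : ℝ → ℂ := fun y => (y : ℂ) ^ (u - 1) * (1 - (y : ℂ)) ^ (v - 1) with hg
  have hA : ∀ x : ℝ, 0 < 1 + Real.exp (-(2 * x)) := fun x => by positivity
  have hderiv : ∀ x ∈ Set.univ, HasDerivWithinAt f (f' x) Set.univ x := by
    intro x _
    have h1 : HasDerivAt (fun x : ℝ => -(2 * x)) (-2) x := by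
      simpa using ((hasDerivAt_id x).const_mul (-2 : ℝ))
    have h2 : HasDerivAt (fun x : ℝ => 1 + Real.exp (-(2 * x)))
        (Real.exp (-(2 * x)) * (-2)) x := (h1.exp).const_add 1
    have h3 := h2.inv (hA x).ne'
    refine (HasDerivAt.hasDerivWithinAt ?_)
    convert h3 using 1
    show 2 * Real.exp (-(2 * x)) / (1 + Real.exp (-(2 * x))) ^ 2 = _
    ring
    all_goals rfl
  have hmono : StrictMono f := by
    intro a b hab
    simp only [hf]
    apply inv_strictAnti₀ (hA b)
    have : Real.exp (-(2 * b)) < Real.exp (-(2 * a)) := by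
      apply Real.exp_lt_exp.2; linarith
    linarith
  have himg : f '' Set.univ = Set.Ioo 0 1 := by
    rw [Set.image_univ]
    ext y
    constructor
    · rintro ⟨x, rfl⟩
      refine ⟨inv_pos.2 (hA x), ?_⟩
      rw [hf]
      exact inv_lt_one_of_one_lt₀ (by nlinarith [Real.exp_pos (-(2 * x))])
    · rintro ⟨hy0, hy1⟩
      refine ⟨-(Real.log (y⁻¹ - 1)) / 2, ?_⟩
      have hy' : 0 < y⁻¹ - 1 := by
        have : 1 < y⁻¹ := one_lt_inv₀ hy0 |>.2 hy1
        linarith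
      simp only [hf]
      rw [show -(2 * (-(Real.log (y⁻¹ - 1)) / 2)) = Real.log (y⁻¹ - 1) by ring,
        Real.exp_log hy']
      field_simp
      ring
  have key : ∀ x : ℝ, Complex.exp (-(Complex.I * k * x)) / ((Real.cosh x : ℂ)) ^ (m + 1)
      = (2 : ℂ) ^ m * (|f' x| • g (f x)) := by
    intro x
    have hA0 : (0:ℝ) < Real.exp (-(2*x)) := Real.exp_pos _
    have hA1 : (0:ℝ) < 1 + Real.exp (-(2*x)) := hA x
    set A : ℝ := Real.exp (-(2*x)) with hAdef
    set L : ℝ := Real.log (1 + A) with hLdef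
    have hfx : (1 + A)⁻¹ = Real.exp (-L) := by
      rw [hLdef, Real.exp_neg, Real.exp_log hA1]
    have h1fx : 1 - (1 + A)⁻¹ = Real.exp (-(2*x) - L) := by
      rw [Real.exp_sub, hAdef, hLdef, Real.exp_log hA1]
      field_simp
      rw [← hAdef]; ring
    have hcosh : Real.cosh x = Real.exp (x + L) / 2 := by
      rw [Real.cosh_eq, Real.exp_add, hLdef, Real.exp_log hA1, hAdef, mul_add, mul_one,
        ← Real.exp_add]
      ring_nf
    have hfpos : (0:ℝ) < (1 + A)⁻¹ := inv_pos.2 hA1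
    have h1fpos : (0:ℝ) < 1 - (1 + A)⁻¹ := by
      rw [h1fx]; exact Real.exp_pos _
    have hfeq : f x = (1 + A)⁻¹ := rfl
    have hf'eq : f' x = 2 * A / (1 + A) ^ 2 := rfl
    rw [hfeq, hf'eq, hg]
    simp only
    have hc1 : (1 : ℂ) - ((1 + A)⁻¹ : ℝ) = ((1 - (1 + A)⁻¹ : ℝ) : ℂ) := by push_cast; ring
    rw [hc1, cpow_pos_eq _ hfpos, cpow_pos_eq _ h1fpos]
    have hlog1 : Real.log ((1 + A)⁻¹) = -L := by rw [Real.log_inv, hLdef]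
    have hlog2 : Real.log (1 - (1 + A)⁻¹) = -(2*x) - L := by
      rw [h1fx, Real.log_exp]
    rw [hlog1, hlog2]
    have habs : |2 * A / (1 + A) ^ 2| = 2 * A / (1 + A)^2 := abs_of_pos (by positivity)
    rw [habs]
    have hfd : (2 * A / (1 + A)^2 : ℝ) = 2 * Real.exp (-(2*x) - 2*L) := by
      rw [show (-(2*x) - 2*L) = (-(2*x) - L) + -L by ring, Real.exp_add, ← h1fx, ← hfx]
      field_simp
      ring
    rw [hfd, hcosh, Complex.real_smul]
    push_cast [Complex.ofReal_exp]
    set e1 : ℂ := -(2*(x:ℂ)) - 2*(L:ℂ) with he1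
    set e2 : ℂ := (u-1) * (-(L:ℂ)) with he2
    set e3 : ℂ := (v-1) * (-(2*(x:ℂ)) - (L:ℂ)) with he3
    set e4 : ℂ := ((m+1:ℕ):ℂ) * ((x:ℂ) + (L:ℂ)) with he4
    have hR : (2:ℂ)^m * (2 * Complex.exp e1 * (Complex.exp e2 * Complex.exp e3))
        * Complex.exp e4 = 2^(m+1) * Complex.exp (e1 + e2 + e3 + e4) := by
      rw [Complex.exp_add, Complex.exp_add, Complex.exp_add]; ring
    rw [div_pow, ← Complex.exp_nat_mul, div_div_eq_mul_div,
      div_eq_iff (Complex.exp_ne_zero _), hR, mul_comm]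
    congr 1
    simp only [he1, he2, he3, he4, hu, hv]
    push_cast
    ring
  calc (∫ x : ℝ, Complex.exp (-(Complex.I * k * x)) / ((Real.cosh x : ℂ)) ^ (m + 1))
      = ∫ x : ℝ, (2 : ℂ) ^ m * (|f' x| • g (f x)) := by
        exact MeasureTheory.integral_congr_ae (Filter.Eventually.of_forall key)
    _ = (2:ℂ)^m * ∫ x : ℝ, |f' x| • g (f x) := MeasureTheory.integral_const_mul _ _
    _ = (2:ℂ)^m * ∫ x in f '' Set.univ, g x := by
        rw [MeasureTheory.integral_image_eq_integral_abs_deriv_smul MeasurableSet.univ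
          hderiv (hmono.injective.injOn) g, MeasureTheory.setIntegral_univ]
    _ = (2:ℂ)^m * Complex.betaIntegral u v := by
        rw [himg, Complex.betaIntegral, intervalIntegral.integral_of_le zero_le_one,
          MeasureTheory.integral_Ioc_eq_integral_Ioo]

lemma aux_ne_zero (a k : ℝ) (ha : a ≠ 0) : ((a : ℂ) + Complex.I * k) / 2 ≠ 0 := by
  intro h
  have h2 : (((a : ℂ) + Complex.I * k) / 2).re = a / 2 := by
    rw [show ((a : ℂ) + Complex.I * k) / 2 = ((a/2 : ℝ) : ℂ) + Complex.I * ((k/2 : ℝ) : ℂ) by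
      push_cast; ring]
    simp [Complex.add_re, Complex.mul_re]
  rw [h] at h2
  simp at h2
  exact ha (by linarith)

lemma gammaOdd (k : ℝ) (n : ℕ) :
    Complex.Gamma ((2 * n + 1 - Complex.I * k) / 2) *
      Complex.Gamma ((2 * n + 1 + Complex.I * k) / 2)
    = (∏ i ∈ Finset.range n, ((k : ℂ) ^ 2 + (2 * (n:ℂ) - 1 - 2 * i) ^ 2)) / 4 ^ n *
      ((Real.pi : ℂ) / (Real.cosh (Real.pi / 2 * k) : ℂ)) := by
  induction n with
  | zero =>
    simp only [Nat.cast_zero, Finset.range_zero, Finset.prod_empty, pow_zero]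
    have h1 : ((2 * (0:ℂ) + 1 + Complex.I * k) / 2) = 1 - ((2 * (0:ℂ) + 1 - Complex.I * k) / 2) := by ring
    rw [h1, Complex.Gamma_mul_Gamma_one_sub]
    have h2 : (Real.pi : ℂ) * ((2 * (0:ℂ) + 1 - Complex.I * k) / 2)
        = (Real.pi:ℂ)/2 - ((Real.pi/2*k : ℝ) : ℂ) * Complex.I := by push_cast; ring
    rw [h2, Complex.sin_pi_div_two_sub, Complex.cos_mul_I, ← Complex.ofReal_cosh]
    ring
  | succ n ih =>
    have e1 : ((2 * ((n:ℂ)+1) + 1 - Complex.I * k) / 2)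
        = ((2 * (n:ℂ) + 1 - Complex.I * k) / 2) + 1 := by ring
    have e2 : ((2 * ((n:ℂ)+1) + 1 + Complex.I * k) / 2)
        = ((2 * (n:ℂ) + 1 + Complex.I * k) / 2) + 1 := by ring
    have hne1 : ((2 * (n:ℂ) + 1 - Complex.I * k) / 2) ≠ 0 := by
      have := aux_ne_zero (2*n+1) (-k) (by positivity)
      convert this using 2 <;> push_cast <;> ring
    have hne2 : ((2 * (n:ℂ) + 1 + Complex.I * k) / 2) ≠ 0 := by
      have := aux_ne_zero (2*n+1) k (by positivity)
      convert this using 2 <;> push_cast <;> ring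
    push_cast
    rw [e1, e2, Complex.Gamma_add_one _ hne1, Complex.Gamma_add_one _ hne2]
    rw [show ∀ a b c d : ℂ, a * b * (c * d) = (a * c) * (b * d) from fun a b c d => by ring]
    rw [ih]
    rw [Finset.prod_range_succ']
    push_cast
    have hfac : ((2 * (n:ℂ) + 1 - Complex.I * k) / 2) * ((2 * (n:ℂ) + 1 + Complex.I * k) / 2)
        = ((k:ℂ)^2 + (2*(n:ℂ)+1)^2) / 4 := by
      linear_combination (-(k:ℂ)^2/4) * Complex.I_sq
    have hprod : (∏ i ∈ Finset.range n, ((k:ℂ)^2 + (2*((n:ℂ)+1) - 1 - 2*((i:ℂ)+1))^2))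
        = ∏ i ∈ Finset.range n, ((k:ℂ)^2 + (2*(n:ℂ)-1-2*(i:ℂ))^2) :=
      Finset.prod_congr rfl (fun i _ => by ring_nf)
    rw [hfac, hprod]
    ring

lemma gammaEven (k : ℝ) (hk : k ≠ 0) (n : ℕ) :
    Complex.Gamma ((2 * n + 2 - Complex.I * k) / 2) *
      Complex.Gamma ((2 * n + 2 + Complex.I * k) / 2)
    = (∏ i ∈ Finset.range n, ((k : ℂ) ^ 2 + (2 * (n:ℂ) - 2 * i) ^ 2)) / 4 ^ n *
      ((Real.pi : ℂ) * k / (2 * (Real.sinh (Real.pi / 2 * k) : ℂ))) := by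
  have hIk : Complex.I * k / 2 ≠ 0 := by
    simp [Complex.I_ne_zero, hk]
  have hsinh : Real.sinh (Real.pi / 2 * k) ≠ 0 := by
    rw [Ne, Real.sinh_eq_zero]
    positivity
  induction n with
  | zero =>
    simp only [Nat.cast_zero, Finset.range_zero, Finset.prod_empty, pow_zero]
    have e1 : ((2 * (0:ℂ) + 2 - Complex.I * k) / 2) = 1 - Complex.I * k / 2 := by ring
    have e2 : ((2 * (0:ℂ) + 2 + Complex.I * k) / 2) = (Complex.I * k / 2) + 1 := by ring
    rw [e1, e2, Complex.Gamma_add_one _ hIk, mul_comm (Complex.Gamma _),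
      mul_assoc, Complex.Gamma_mul_Gamma_one_sub]
    have h3 : (Real.pi : ℂ) * (Complex.I * k / 2) = ((Real.pi / 2 * k : ℝ) : ℂ) * Complex.I := by
      push_cast; ring
    rw [h3, Complex.sin_mul_I, ← Complex.ofReal_sinh]
    have hs : ((Real.sinh (Real.pi / 2 * k) : ℝ) : ℂ) ≠ 0 := by exact_mod_cast hsinh
    have hSI : ((Real.sinh (Real.pi / 2 * k) : ℝ) : ℂ) * Complex.I ≠ 0 :=
      mul_ne_zero hs Complex.I_ne_zero
    have h2S : (2 : ℂ) * ((Real.sinh (Real.pi / 2 * k) : ℝ) : ℂ) ≠ 0 :=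
      mul_ne_zero two_ne_zero hs
    rw [one_div_one, one_mul, mul_div_assoc', div_eq_div_iff hSI h2S]
    ring
  | succ n ih =>
    have e1 : ((2 * ((n:ℂ)+1) + 2 - Complex.I * k) / 2)
        = ((2 * (n:ℂ) + 2 - Complex.I * k) / 2) + 1 := by ring
    have e2 : ((2 * ((n:ℂ)+1) + 2 + Complex.I * k) / 2)
        = ((2 * (n:ℂ) + 2 + Complex.I * k) / 2) + 1 := by ring
    have hne1 : ((2 * (n:ℂ) + 2 - Complex.I * k) / 2) ≠ 0 := by
      have := aux_ne_zero (2*n+2) (-k) (by positivity)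
      convert this using 2 <;> push_cast <;> ring
    have hne2 : ((2 * (n:ℂ) + 2 + Complex.I * k) / 2) ≠ 0 := by
      have := aux_ne_zero (2*n+2) k (by positivity)
      convert this using 2 <;> push_cast <;> ring
    push_cast
    rw [e1, e2, Complex.Gamma_add_one _ hne1, Complex.Gamma_add_one _ hne2]
    rw [show ∀ a b c d : ℂ, a * b * (c * d) = (a * c) * (b * d) from fun a b c d => by ring]
    rw [ih]
    rw [Finset.prod_range_succ']
    push_cast
    have hfac : ((2 * (n:ℂ) + 2 - Complex.I * k) / 2) * ((2 * (n:ℂ) + 2 + Complex.I * k) / 2)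
        = ((k:ℂ)^2 + (2*(n:ℂ)+2)^2) / 4 := by
      linear_combination (-(k:ℂ)^2/4) * Complex.I_sq
    have hprod : (∏ i ∈ Finset.range n, ((k:ℂ)^2 + (2*((n:ℂ)+1) - 2*((i:ℂ)+1))^2))
        = ∏ i ∈ Finset.range n, ((k:ℂ)^2 + (2*(n:ℂ)-2*(i:ℂ))^2) :=
      Finset.prod_congr rfl (fun i _ => by ring_nf)
    rw [hfac, hprod]
    ring

lemma integral_eq_gamma (m : ℕ) (hm : 1 ≤ m) (k : ℝ) :
    (∫ x : ℝ, Complex.exp (-(Complex.I * k * x)) / ((Real.cosh x : ℂ)) ^ m)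
      = 2 ^ (m - 1) * (Complex.Gamma ((m - Complex.I * k) / 2) *
          Complex.Gamma ((m + Complex.I * k) / 2)) / ((Nat.factorial (m-1) : ℂ)) := by
  have hre1 : (((m:ℂ) - Complex.I * k) / 2).re = m / 2 := by
    rw [show ((m:ℂ) - Complex.I * k)/2 = ((m/2 : ℝ) : ℂ) + Complex.I * ((-k/2 : ℝ) : ℂ) by
      push_cast; ring]
    simp [Complex.add_re, Complex.mul_re]
  have hre2 : (((m:ℂ) + Complex.I * k) / 2).re = m / 2 := by
    rw [show ((m:ℂ) + Complex.I * k)/2 = ((m/2 : ℝ) : ℂ) + Complex.I * ((k/2 : ℝ) : ℂ) by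
      push_cast; ring]
    simp [Complex.add_re, Complex.mul_re]
  have hmpos : (0:ℝ) < m / 2 := by
    have : (1:ℝ) ≤ m := by exact_mod_cast hm
    linarith
  have hGG := Complex.Gamma_mul_Gamma_eq_betaIntegral
    (by rw [hre1]; exact hmpos) (by rw [hre2]; exact hmpos)
  have hsum : ((m:ℂ) - Complex.I * k) / 2 + ((m:ℂ) + Complex.I * k) / 2 = ((m-1 : ℕ) : ℂ) + 1 := by
    have : ((m - 1 : ℕ) : ℂ) + 1 = (m : ℂ) := by
      exact_mod_cast congrArg (Nat.cast : ℕ → ℂ) (Nat.succ_pred_eq_of_pos hm)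
    rw [this]; ring
  rw [hsum, Complex.Gamma_nat_eq_factorial] at hGG
  have hfac : ((Nat.factorial (m-1) : ℂ)) ≠ 0 := by
    exact_mod_cast (Nat.factorial_ne_zero (m-1))
  rw [integral_eq_beta m hm k, eq_div_iff hfac, mul_assoc, hGG]
  ring

/-- Fourier transform of `cosh(x)^{-m}`:
`∫ e^{-ikx} cosh(x)^{-m} dx = (π/(m-1)!) (∏_{l=m-2, m-4, …, ≥1} (k²+l²)) · (1/cosh(πk/2))`
for `m` odd, and `… · (k/sinh(πk/2))` for `m` even (away from `k = 0`). -/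
theorem stmt_1 (m : ℕ) (hm : 1 ≤ m) (k : ℝ) :
    (Odd m →
      (∫ x : ℝ, Complex.exp (-(Complex.I * k * x)) / ((Real.cosh x : ℂ)) ^ m)
        = ((Real.pi / (Nat.factorial (m - 1)) *
            (∏ i ∈ Finset.range ((m - 1) / 2), (k ^ 2 + ((m : ℝ) - 2 - 2 * i) ^ 2)) *
            (1 / Real.cosh (Real.pi / 2 * k)) : ℝ) : ℂ)) ∧
    (Even m → k ≠ 0 →
      (∫ x : ℝ, Complex.exp (-(Complex.I * k * x)) / ((Real.cosh x : ℂ)) ^ m)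
        = ((Real.pi / (Nat.factorial (m - 1)) *
            (∏ i ∈ Finset.range ((m - 1) / 2), (k ^ 2 + ((m : ℝ) - 2 - 2 * i) ^ 2)) *
            (k / Real.sinh (Real.pi / 2 * k)) : ℝ) : ℂ)) := by
  constructor
  · rintro ⟨n, rfl⟩
    rw [integral_eq_gamma _ hm k]
    have harg : ((2*n+1 : ℕ) : ℂ) = 2 * (n:ℂ) + 1 := by push_cast; ring
    rw [harg, gammaOdd k n]
    have hidx : (2*n+1-1)/2 = n := by omega
    have hsub : 2*n+1-1 = 2*n := by omega
    rw [hidx, hsub]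
    have hcne : ((Real.cosh (Real.pi / 2 * k) : ℝ) : ℂ) ≠ 0 := by
      exact_mod_cast (Real.cosh_pos (x := Real.pi/2*k)).ne'
    have hfne : ((Nat.factorial (2*n) : ℕ) : ℂ) ≠ 0 := by
      exact_mod_cast (Nat.factorial_ne_zero (2*n))
    have hP : ((∏ i ∈ Finset.range n, (k^2 + (((2*n+1 : ℕ):ℝ) - 2 - 2*i)^2) : ℝ) : ℂ)
        = ∏ i ∈ Finset.range n, ((k:ℂ)^2 + (2*(n:ℂ) - 1 - 2*i)^2) := by
      push_cast
      exact Finset.prod_congr rfl fun i _ => by ring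
    rw [show ((2:ℂ))^(2*n) = 4^n by rw [pow_mul]; norm_num]
    rw [Complex.ofReal_mul, Complex.ofReal_mul, hP, Complex.ofReal_div, Complex.ofReal_div,
      Complex.ofReal_one, Complex.ofReal_natCast]
    have h4 : ((4:ℂ))^n ≠ 0 := pow_ne_zero n (by norm_num)
    field_simp
  · rintro ⟨r, hr⟩ hk
    obtain ⟨n, rfl⟩ : ∃ n, m = 2*n+2 := ⟨m/2 - 1, by omega⟩
    rw [integral_eq_gamma _ hm k]
    have harg : ((2*n+2 : ℕ) : ℂ) = 2 * (n:ℂ) + 2 := by push_cast; ring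
    rw [harg, gammaEven k hk n]
    have hidx : (2*n+2-1)/2 = n := by omega
    have hsub : 2*n+2-1 = 2*n+1 := by omega
    rw [hidx, hsub]
    have hsne : ((Real.sinh (Real.pi / 2 * k) : ℝ) : ℂ) ≠ 0 := by
      have : Real.sinh (Real.pi/2*k) ≠ 0 := by
        rw [Ne, Real.sinh_eq_zero]; positivity
      exact_mod_cast this
    have hfne : ((Nat.factorial (2*n+1) : ℕ) : ℂ) ≠ 0 := by
      exact_mod_cast (Nat.factorial_ne_zero (2*n+1))
    have hP : ((∏ i ∈ Finset.range n, (k^2 + (((2*n+2 : ℕ):ℝ) - 2 - 2*i)^2) : ℝ) : ℂ)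
        = ∏ i ∈ Finset.range n, ((k:ℂ)^2 + (2*(n:ℂ) - 2*i)^2) := by
      push_cast
      exact Finset.prod_congr rfl fun i _ => by ring
    rw [show ((2:ℂ))^(2*n+1) = 4^n * 2 by rw [pow_succ, pow_mul]; norm_num]
    rw [Complex.ofReal_mul, Complex.ofReal_mul, hP, Complex.ofReal_div, Complex.ofReal_div,
      Complex.ofReal_natCast]
    have h4 : ((4:ℂ))^n ≠ 0 := pow_ne_zero n (by norm_num)
    set P : ℂ := ∏ i ∈ Finset.range n, ((k:ℂ)^2 + (2*(n:ℂ) - 2*i)^2) with hPv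
    set S : ℂ := ((Real.sinh (Real.pi / 2 * k) : ℝ) : ℂ) with hSv
    set F : ℂ := ((Nat.factorial (2*n+1) : ℕ) : ℂ) with hFv
    field_simp
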